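/- Let d ≥ 1, λ ≥ 1, r = 1, x = 0 ∈ ℝ^d, and y = (y₁, 0, ..., 0) with 1 ≤ y₁ ≤ λ. Set z = (1/(10λ), 0, ..., 0). Then every point u in B(x,1) ∩ B(y, ‖y‖) satisfies ‖u − z‖² < 1 − 1/(100λ²). -/

import Mathlib

set_option maxHeartbeats 1000000


open Metric

theorem stmt_4 (d : ℕ) (hd : 0 < d) (lam y₁ : ℝ) (hlam : 1 ≤ lam)
    (hy₁ : 1 ≤ y₁) (hy₁' : y₁ ≤ lam)
    (y z : EuclideanSpace ℝ (Fin d))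
    (hy : y = EuclideanSpace.single (⟨0, hd⟩ : Fin d) y₁)
    (hz : z = EuclideanSpace.single (⟨0, hd⟩ : Fin d) (1 / (10 * lam)))
    (u : EuclideanSpace ℝ (Fin d))
    (hu : u ∈ ball (0 : EuclideanSpace ℝ (Fin d)) 1 ∩ ball y ‖y‖) :
    ‖u - z‖ ^ 2 < 1 - 1 / (100 * lam ^ 2) := by
  obtain ⟨hu1, hu2⟩ := hu
  rw [mem_ball, dist_zero_right] at hu1
  rw [mem_ball, dist_eq_norm] at hu2
  set u₀ : ℝ := u ⟨0, hd⟩ with hu₀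
  have hlam0 : (0:ℝ) < lam := by linarith
  have ha0 : (0:ℝ) < 1 / (10 * lam) := by positivity
  have ht : ‖u‖ ^ 2 < 1 := by nlinarith [norm_nonneg u]
  have ht0 : (0:ℝ) ≤ ‖u‖ ^ 2 := sq_nonneg _
  have hiy : (inner ℝ u y : ℝ) = y₁ * u₀ := by
    rw [hy, EuclideanSpace.inner_single_right]; simp [hu₀]
  have hiz : (inner ℝ u z : ℝ) = (1 / (10 * lam)) * u₀ := by
    rw [hz, EuclideanSpace.inner_single_right]; simp [hu₀]
  have hny : ‖y‖ = y₁ := by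
    rw [hy, EuclideanSpace.norm_single, Real.norm_eq_abs, abs_of_pos (by linarith)]
  have hnz : ‖z‖ = 1 / (10 * lam) := by
    rw [hz, EuclideanSpace.norm_single, Real.norm_eq_abs, abs_of_pos ha0]
  have h2 : ‖u - y‖ ^ 2 < ‖y‖ ^ 2 := by
    nlinarith [norm_nonneg (u - y), norm_nonneg y]
  rw [norm_sub_sq_real, hiy] at h2
  have h3 : ‖u‖ ^ 2 < 2 * y₁ * u₀ := by nlinarith
  have hu0pos : 0 < u₀ := by nlinarith
  have h4 : ‖u‖ ^ 2 < 2 * lam * u₀ := by nlinarith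
  rw [norm_sub_sq_real, hiz, hnz]
  have ha : (1 / (10 * lam)) * (10 * lam) = 1 := by field_simp
  have haa : (1 / (10 * lam))^2 ≤ 1/100 := by
    rw [div_pow, one_pow]
    rw [div_le_div_iff₀ (by positivity) (by norm_num)]
    nlinarith
  have hb : 1 / (100 * lam ^ 2) = (1 / (10 * lam))^2 := by
    field_simp; ring
  rw [hb]
  set a : ℝ := 1 / (10 * lam)
  -- goal: ‖u‖^2 - 2*(a*u₀) + a^2 < 1 - a^2
  nlinarith [mul_pos ha0 hu0pos, mul_pos ha0 (sub_pos.mpr h4), sq_nonneg a, mul_pos ha0 ha0]
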